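/- arXiv:1809.01765 — 5 statements merged into one kernel-verified Lean document; each statement's English description precedes it below -/
import Mathlib

section
/- Let m, s, s_* be natural numbers with s_* ≤ s < m, let θ ∈ ℝ^m, and let θ_* ∈ ℝ^m satisfy ‖θ_*‖₀ ≤ s_*. Then ‖H_s(θ) − θ‖² ≤ ((m − s)/(m − s_*)) · ‖θ − θ_*‖². -/
open scoped BigOperators

open Classical in
noncomputable def supp {d : ℕ} (x : EuclideanSpace ℝ (Fin d)) : Finset (Fin d) :=
  Finset.univ.filter fun j => x j ≠ 0

noncomputable def norm0 {d : ℕ} (x : EuclideanSpace ℝ (Fin d)) : ℕ := (supp x).card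

/-- `w` is a hard thresholding of `v` at sparsity level `s`:
`w ∈ argmin {‖u − v‖ : ‖u‖₀ ≤ s}`. -/
def IsHardThreshold {d : ℕ} (s : ℕ) (v w : EuclideanSpace ℝ (Fin d)) : Prop :=
  norm0 w ≤ s ∧ ∀ u : EuclideanSpace ℝ (Fin d), norm0 u ≤ s → ‖w - v‖ ≤ ‖u - v‖

lemma sq_norm_eq {d : ℕ} (x : EuclideanSpace ℝ (Fin d)) : ‖x‖ ^ 2 = ∑ j, x j ^ 2 := by
  rw [EuclideanSpace.norm_eq, Real.sq_sqrt (by positivity)]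
  simp [sq_abs]

lemma min_subset_sum {α : Type*} [DecidableEq α] (A : Finset α) (f : α → ℝ)
    (k : ℕ) (hk : k ≤ A.card) :
    ∃ B ∈ A.powersetCard k, (A.card : ℝ) * ∑ j ∈ B, f j ≤ k * ∑ j ∈ A, f j := by
  obtain ⟨B, hB, hmin⟩ := Finset.exists_min_image (A.powersetCard k) (fun B => ∑ j ∈ B, f j)
    (Finset.powersetCard_nonempty.2 hk)
  obtain ⟨hBA, hBcard⟩ := Finset.mem_powersetCard.1 hB
  refine ⟨B, hB, ?_⟩
  have hswap : ∀ b ∈ B, ∀ a ∈ A \ B, f b ≤ f a := by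
    intro b hb a ha
    have haA := (Finset.mem_sdiff.1 ha).1
    have haB := (Finset.mem_sdiff.1 ha).2
    have hB' : insert a (B.erase b) ∈ A.powersetCard k := by
      refine Finset.mem_powersetCard.2 ⟨?_, ?_⟩
      · intro x hx
        rcases Finset.mem_insert.1 hx with rfl | hx
        · exact haA
        · exact hBA (Finset.mem_of_mem_erase hx)
      · rw [Finset.card_insert_of_notMem (fun h => haB (Finset.mem_of_mem_erase h)),
          Finset.card_erase_of_mem hb, hBcard]
        have : 0 < k := hBcard ▸ Finset.card_pos.2 ⟨b, hb⟩
        omega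
    have := hmin _ hB'
    rw [Finset.sum_insert (fun h => haB (Finset.mem_of_mem_erase h))] at this
    have herase : ∑ j ∈ B.erase b, f j = ∑ j ∈ B, f j - f b := by
      rw [eq_sub_iff_add_eq, Finset.sum_erase_add _ _ hb]
    rw [herase] at this
    linarith
  have hstep : ∀ b ∈ B, ((A.card - k : ℕ) : ℝ) * f b ≤ ∑ a ∈ A \ B, f a := by
    intro b hb
    have := Finset.card_nsmul_le_sum (A \ B) f (f b) (fun a ha => hswap b hb a ha)
    rwa [Finset.card_sdiff_of_subset hBA, hBcard, nsmul_eq_mul] at this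
  have h1 : ((A.card - k : ℕ) : ℝ) * ∑ j ∈ B, f j ≤ (k : ℝ) * ∑ a ∈ A \ B, f a := by
    calc ((A.card - k : ℕ) : ℝ) * ∑ j ∈ B, f j = ∑ b ∈ B, ((A.card - k : ℕ) : ℝ) * f b := by
          rw [Finset.mul_sum]
      _ ≤ ∑ b ∈ B, ∑ a ∈ A \ B, f a := Finset.sum_le_sum hstep
      _ = (k : ℝ) * ∑ a ∈ A \ B, f a := by rw [Finset.sum_const, hBcard, nsmul_eq_mul]
  have hsplit : ∑ a ∈ A \ B, f a + ∑ j ∈ B, f j = ∑ j ∈ A, f j := Finset.sum_sdiff hBA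
  have hcast : ((A.card - k : ℕ) : ℝ) = (A.card : ℝ) - k := by
    push_cast [Nat.cast_sub hk]; ring
  rw [hcast] at h1
  nlinarith [h1, hsplit]

/-- For `s_* ≤ s < m`, `θ ∈ ℝ^m` and `θ_*` with `‖θ_*‖₀ ≤ s_*`,
`‖H_s(θ) − θ‖² ≤ ((m − s)/(m − s_*)) ‖θ − θ_*‖²`. -/
theorem hardThreshold_sq_dist_le {m s sstar : ℕ} (hss : sstar ≤ s) (hsm : s < m)
    (θ θstar θ' : EuclideanSpace ℝ (Fin m)) (hθstar : norm0 θstar ≤ sstar)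
    (hHT : IsHardThreshold s θ θ') :
    ‖θ' - θ‖ ^ 2 ≤ ((m : ℝ) - s) / ((m : ℝ) - sstar) * ‖θ - θstar‖ ^ 2 := by
  classical
  set S : Finset (Fin m) := supp θstar with hS
  set A : Finset (Fin m) := Sᶜ with hA
  have hAcard : A.card = m - S.card := by
    rw [hA, Finset.card_compl, Fintype.card_fin]
  have hScard : S.card ≤ sstar := hθstar
  have hkA : m - s ≤ A.card := by omega
  obtain ⟨B, hB, hBineq⟩ := min_subset_sum A (fun j => θ j ^ 2) (m - s) hkA
  obtain ⟨hBA, hBcard⟩ := Finset.mem_powersetCard.1 hB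
  set u : EuclideanSpace ℝ (Fin m) := WithLp.toLp 2 (fun j => if j ∈ B then 0 else θ j) with hu
  have hu0 : norm0 u ≤ s := by
    have hsub : supp u ⊆ Bᶜ := by
      intro j hj
      simp only [supp, Finset.mem_filter, hu] at hj
      simp only [Finset.mem_compl]
      intro hjB
      exact hj.2 (by simp [hjB])
    calc norm0 u ≤ Bᶜ.card := Finset.card_le_card hsub
      _ = m - B.card := by rw [Finset.card_compl, Fintype.card_fin]
      _ ≤ s := by omega
  have huθ : ‖u - θ‖ ^ 2 = ∑ j ∈ B, θ j ^ 2 := by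
    rw [sq_norm_eq]
    rw [← Finset.sum_subset (Finset.subset_univ B)
      (by intro x _ hx; simp [hu, PiLp.sub_apply, hx])]
    apply Finset.sum_congr rfl
    intro x hx
    simp [hu, PiLp.sub_apply, hx]
  have hlow : ∑ j ∈ A, θ j ^ 2 ≤ ‖θ - θstar‖ ^ 2 := by
    calc ∑ j ∈ A, θ j ^ 2 = ∑ j ∈ A, (θ j - θstar j) ^ 2 := by
          apply Finset.sum_congr rfl
          intro j hj
          have hj0 : θstar j = 0 := by
            have := Finset.mem_compl.1 hj
            simpa [hS, supp] using this
          rw [hj0]; ring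
      _ ≤ ∑ j, (θ j - θstar j) ^ 2 :=
          Finset.sum_le_sum_of_subset_of_nonneg (Finset.subset_univ A)
            (fun _ _ _ => sq_nonneg _)
      _ = ‖θ - θstar‖ ^ 2 := by
          rw [sq_norm_eq]
          exact Finset.sum_congr rfl fun j _ => by simp [PiLp.sub_apply]
  have hsm' : sstar < m := lt_of_le_of_lt hss hsm
  have hc : (0 : ℝ) < (m : ℝ) - sstar := by
    have : (sstar : ℝ) < m := by exact_mod_cast hsm'
    linarith
  have hBnn : (0 : ℝ) ≤ ∑ j ∈ B, θ j ^ 2 := Finset.sum_nonneg fun _ _ => sq_nonneg _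
  have hAnn : (0 : ℝ) ≤ ∑ j ∈ A, θ j ^ 2 := Finset.sum_nonneg fun _ _ => sq_nonneg _
  have hcast1 : ((m - s : ℕ) : ℝ) = (m : ℝ) - s := by
    push_cast [Nat.cast_sub hsm.le]; ring
  rw [hcast1] at hBineq
  have hAcast : ((m : ℝ) - sstar) ≤ (A.card : ℝ) := by
    rw [hAcard]
    rw [Nat.cast_sub (le_trans hScard hsm'.le)]
    have : (S.card : ℝ) ≤ sstar := by exact_mod_cast hScard
    linarith
  have h2 : ((m : ℝ) - sstar) * ∑ j ∈ B, θ j ^ 2 ≤ ((m : ℝ) - s) * ∑ j ∈ A, θ j ^ 2 := by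
    nlinarith [hBineq, hBnn, hAcast]
  have hsq : ‖θ' - θ‖ ^ 2 ≤ ‖u - θ‖ ^ 2 :=
    pow_le_pow_left₀ (norm_nonneg _) (hHT.2 u hu0) 2
  calc ‖θ' - θ‖ ^ 2 ≤ ∑ j ∈ B, θ j ^ 2 := huθ ▸ hsq
    _ ≤ ((m : ℝ) - s) / ((m : ℝ) - sstar) * ∑ j ∈ A, θ j ^ 2 := by
        rw [div_mul_eq_mul_div, le_div_iff₀ hc]
        linarith [h2]
    _ ≤ ((m : ℝ) - s) / ((m : ℝ) - sstar) * ‖θ - θstar‖ ^ 2 := by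
        apply mul_le_mul_of_nonneg_left hlow
        apply div_nonneg _ hc.le
        have : (s : ℝ) < m := by exact_mod_cast hsm
        linarith
end

section
/- Let L : ℝ^d → ℝ be differentiable, let μ_s > 0, and let θ, θ_* ∈ ℝ^d with ‖θ‖₀ ≤ s and ‖θ_*‖₀ ≤ s satisfy the restricted strong convexity inequality L(θ_*) ≥ L(θ) + ⟨∇L(θ), θ_* − θ⟩ + (μ_s/2)‖θ_* − θ‖². Set S = supp(θ) and S_* = supp(θ_*). Then (μ_s²/4)‖θ − θ_*‖² − ‖∇L(θ)|_{S∪S_*}‖² ≤ μ_s (L(θ_*) − L(θ)). -/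
open scoped BigOperators RealInnerProductSpace

noncomputable def restrict {d : ℕ} (x : EuclideanSpace ℝ (Fin d)) (S : Finset (Fin d)) :
    EuclideanSpace ℝ (Fin d) := WithLp.toLp 2 (fun j => if j ∈ S then x j else 0)

/-- If `L` is differentiable with gradient `g` at `θ`, `μ_s > 0`,
`‖θ‖₀ ≤ s`, `‖θ_*‖₀ ≤ s` and the restricted strong convexity inequality
`L(θ_*) ≥ L(θ) + ⟨g, θ_* − θ⟩ + (μ_s/2)‖θ_* − θ‖²` holds, then
`(μ_s²/4)‖θ − θ_*‖² − ‖g|_{S ∪ S_*}‖² ≤ μ_s (L(θ_*) − L(θ))`. -/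
theorem rsc_gradient_lower_bound {d s : ℕ} (L : EuclideanSpace ℝ (Fin d) → ℝ)
    (μs : ℝ) (hμ : 0 < μs) (θ θstar g : EuclideanSpace ℝ (Fin d))
    (hθ : norm0 θ ≤ s) (hθstar : norm0 θstar ≤ s)
    (hgrad : HasGradientAt L g θ)
    (hrsc : L θ + ⟪g, θstar - θ⟫ + μs / 2 * ‖θstar - θ‖ ^ 2 ≤ L θstar) :
    μs ^ 2 / 4 * ‖θ - θstar‖ ^ 2 - ‖restrict g (supp θ ∪ supp θstar)‖ ^ 2
      ≤ μs * (L θstar - L θ) := by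
  classical
  set S := supp θ ∪ supp θstar with hS
  set v : EuclideanSpace ℝ (Fin d) := θstar - θ with hv
  have hinner : ⟪g, v⟫ = ⟪restrict g S, v⟫ := by
    simp only [PiLp.inner_apply, RCLike.inner_apply, conj_trivial]
    refine Finset.sum_congr rfl fun i _ => ?_
    by_cases hi : i ∈ S
    · simp [restrict, hi]
    · have h1 : θ i = 0 := by
        by_contra h
        exact hi (Finset.mem_union_left _ (by simp [supp, h]))
      have h2 : θstar i = 0 := by
        by_contra h
        exact hi (Finset.mem_union_right _ (by simp [supp, h]))
      have : v i = 0 := by simp [hv, h1, h2]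
      simp [this]
  have hsq : (0:ℝ) ≤ ‖restrict g S + (μs/2) • v‖ ^ 2 := by positivity
  have hexp : ‖restrict g S + (μs/2) • v‖ ^ 2
      = ‖restrict g S‖ ^ 2 + μs * ⟪restrict g S, v⟫ + μs^2/4 * ‖v‖ ^ 2 := by
    rw [norm_add_sq_real, real_inner_smul_right, norm_smul]
    have : ‖(μs/2 : ℝ)‖ = μs/2 := abs_of_pos (by linarith)
    rw [this]; ring
  have hnorm : ‖θ - θstar‖ = ‖v‖ := by rw [hv, norm_sub_rev]
  rw [hnorm]
  nlinarith [hrsc, hsq, hexp, hinner, mul_le_mul_of_nonneg_left hrsc hμ.le]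
end

section
/- Let θ ∈ ℝ^d with ‖θ‖₀ ≤ s, let g ∈ ℝ^d, let η > 0, and let θ' = H_s(θ − η g). Then ⟨g, θ' − θ⟩ ≤ −(η/2) ‖g|_{supp(θ') ∪ supp(θ)}‖². -/
open scoped BigOperators RealInnerProductSpace

lemma normsq_eq {d : ℕ} (x : EuclideanSpace ℝ (Fin d)) : ‖x‖ ^ 2 = ∑ j, (x j) ^ 2 := by
  rw [EuclideanSpace.norm_eq, Real.sq_sqrt (by positivity)]
  simp [sq_abs]

lemma supp_zero {d : ℕ} (x : EuclideanSpace ℝ (Fin d)) {j : Fin d} (h : j ∉ supp x) :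
    x j = 0 := by
  by_contra hx
  exact h (by simp [supp, hx])

lemma norm0_le_of_supp_subset {d : ℕ} {x : EuclideanSpace ℝ (Fin d)} {S : Finset (Fin d)}
    (h : ∀ j, x j ≠ 0 → j ∈ S) : norm0 x ≤ S.card := by
  apply Finset.card_le_card
  intro j hj
  simp only [supp, Finset.mem_filter] at hj
  exact h j hj.2

/-- For `θ` with `‖θ‖₀ ≤ s`, `g ∈ ℝ^d`, `η > 0` and
`θ' = H_s(θ − η g)`, we have `⟨g, θ' − θ⟩ ≤ −(η/2) ‖g|_{supp θ' ∪ supp θ}‖²`. -/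
theorem inner_grad_step_le {d s : ℕ} (θ g θ' : EuclideanSpace ℝ (Fin d)) (η : ℝ)
    (hη : 0 < η) (hθ : norm0 θ ≤ s) (hHT : IsHardThreshold s (θ - η • g) θ') :
    ⟪g, θ' - θ⟫ ≤ -(η / 2) * ‖restrict g (supp θ' ∪ supp θ)‖ ^ 2 := by
  set v : EuclideanSpace ℝ (Fin d) := θ - η • g with hv
  set T : Finset (Fin d) := supp θ' with hT
  set Sθ : Finset (Fin d) := supp θ with hSθ
  set A : Finset (Fin d) := Sθ \ T with hA
  have hvj : ∀ j, v j = θ j - η * g j := fun j => by simp [hv]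
  -- squared minimality
  have hsq : ∀ u : EuclideanSpace ℝ (Fin d), norm0 u ≤ s →
      ∑ j, (θ' j - v j) ^ 2 ≤ ∑ j, (u j - v j) ^ 2 := by
    intro u hu
    have h := hHT.2 u hu
    have h2 : ‖θ' - v‖ ^ 2 ≤ ‖u - v‖ ^ 2 :=
      pow_le_pow_left₀ (norm_nonneg _) h 2
    rw [normsq_eq, normsq_eq] at h2
    simpa using h2
  -- θ' agrees with v on T
  have hTv : ∀ j ∈ T, θ' j = v j := by
    intro j hj
    have hu : norm0 (restrict v T) ≤ s := by
      refine le_trans (norm0_le_of_supp_subset ?_) hHT.1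
      intro k hk
      by_contra hkT
      exact hk (by simp [restrict, hT, hkT])
    have h := hsq _ hu
    have heq : ∀ k, ((restrict v T) k - v k) ^ 2 =
        if k ∈ T then 0 else (θ' k - v k) ^ 2 := by
      intro k
      by_cases hk : k ∈ T
      · simp [restrict, hk]
      · simp [restrict, hk, supp_zero θ' hk]
    rw [Finset.sum_congr rfl (fun k _ => heq k)] at h
    rw [Finset.sum_ite, Finset.sum_const_zero, zero_add] at h
    -- h : ∑ univ (θ' k - v k)^2 ≤ ∑ (filter (¬ ∈ T)) ...
    have hsplit : ∑ k, (θ' k - v k) ^ 2 =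
        ∑ k ∈ T, (θ' k - v k) ^ 2 + ∑ k ∈ Finset.univ.filter (fun k => ¬ k ∈ T), (θ' k - v k) ^ 2 := by
      rw [← Finset.sum_filter_add_sum_filter_not Finset.univ (fun k => k ∈ T)]
      congr 1
      apply Finset.sum_congr (by simp [Finset.filter_univ_mem]) (fun _ _ => rfl)
    rw [hsplit] at h
    have hle : ∑ k ∈ T, (θ' k - v k) ^ 2 ≤ 0 := by linarith
    have hz := (Finset.sum_eq_zero_iff_of_nonneg (fun k _ => sq_nonneg _)).1
      (le_antisymm hle (Finset.sum_nonneg fun k _ => sq_nonneg _))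
    have := hz j hj
    nlinarith [this]
  -- key inequality: ∑_A v² ≤ η² ∑_T g²
  have hkey : ∑ j ∈ A, (v j) ^ 2 ≤ η ^ 2 * ∑ j ∈ T, (g j) ^ 2 := by
    obtain ⟨C, hCsub, hCcard⟩ := Finset.exists_subset_card_eq
      (min_le_right A.card (T \ Sθ).card)
    have hCT : C ⊆ T := hCsub.trans (Finset.sdiff_subset)
    set W : Finset (Fin d) := (T \ C) ∪ A with hW
    have hsparse : norm0 (restrict v W) ≤ s := by
      refine le_trans (norm0_le_of_supp_subset (S := W) ?_) ?_
      · intro k hk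
        by_contra hkW
        exact hk (by simp [restrict, hkW])
      · have h1 : W.card ≤ (T \ C).card + A.card := Finset.card_union_le _ _
        have h2 : (T \ C).card = T.card - C.card := Finset.card_sdiff_of_subset hCT
        have h3 : C.card ≤ T.card := Finset.card_le_card hCT
        have h4 : T.card ≤ s := hHT.1
        have h5 : (Sθ \ T).card + (Sθ ∩ T).card = Sθ.card := Finset.card_sdiff_add_card_inter _ _
        have h6 : (T \ Sθ).card + (T ∩ Sθ).card = T.card := Finset.card_sdiff_add_card_inter _ _
        have h7 : Sθ.card ≤ s := hθ
        have h8 : (Sθ ∩ T).card = (T ∩ Sθ).card := by rw [Finset.inter_comm]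
        rcases le_total A.card (T \ Sθ).card with hc | hc
        · have : C.card = A.card := by rw [hCcard, min_eq_left hc]
          omega
        · have : C.card = (T \ Sθ).card := by rw [hCcard, min_eq_right hc]
          have hAcard : A.card = (Sθ \ T).card := rfl
          omega
    have h := hsq _ hsparse
    have heq1 : ∀ k, (θ' k - v k) ^ 2 = if k ∈ T then 0 else (v k) ^ 2 := by
      intro k
      by_cases hk : k ∈ T
      · simp [hk, hTv k hk]
      · simp [hk, supp_zero θ' hk]
    have heq2 : ∀ k, ((restrict v W) k - v k) ^ 2 = if k ∈ W then 0 else (v k) ^ 2 := by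
      intro k
      by_cases hk : k ∈ W <;> simp [restrict, hk]
    rw [Finset.sum_congr rfl fun k _ => heq1 k, Finset.sum_congr rfl fun k _ => heq2 k] at h
    rw [Finset.sum_ite, Finset.sum_ite, Finset.sum_const_zero, Finset.sum_const_zero,
      zero_add, zero_add] at h
    -- h : ∑_{k ∉ T} v² ≤ ∑_{k ∉ W} v²  → ∑_W v² ≤ ∑_T v²
    have hWT : ∑ k ∈ W, (v k) ^ 2 ≤ ∑ k ∈ T, (v k) ^ 2 := by
      have e1 : ∑ k ∈ Finset.univ.filter (fun k => ¬ k ∈ T), (v k) ^ 2 =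
          ∑ k, (v k) ^ 2 - ∑ k ∈ T, (v k) ^ 2 := by
        rw [eq_sub_iff_add_eq, ← Finset.sum_filter_add_sum_filter_not Finset.univ (fun k => k ∈ T)]
        rw [add_comm]
        congr 1
        apply Finset.sum_congr (by simp [Finset.filter_univ_mem]) (fun _ _ => rfl)
      have e2 : ∑ k ∈ Finset.univ.filter (fun k => ¬ k ∈ W), (v k) ^ 2 =
          ∑ k, (v k) ^ 2 - ∑ k ∈ W, (v k) ^ 2 := by
        rw [eq_sub_iff_add_eq, ← Finset.sum_filter_add_sum_filter_not Finset.univ (fun k => k ∈ W)]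
        rw [add_comm]
        congr 1
        apply Finset.sum_congr (by simp [Finset.filter_univ_mem]) (fun _ _ => rfl)
      rw [e1, e2] at h
      linarith
    have hdisj : Disjoint (T \ C) A := by
      have : Disjoint T A := Finset.disjoint_sdiff
      exact this.mono_left Finset.sdiff_subset
    rw [Finset.sum_union hdisj] at hWT
    have hTsplit : ∑ k ∈ T, (v k) ^ 2 = ∑ k ∈ T \ C, (v k) ^ 2 + ∑ k ∈ C, (v k) ^ 2 := by
      rw [Finset.sum_sdiff hCT]
    rw [hTsplit] at hWT
    have hAC : ∑ j ∈ A, (v j) ^ 2 ≤ ∑ j ∈ C, (v j) ^ 2 := by linarith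
    have hCbound : ∑ j ∈ C, (v j) ^ 2 ≤ η ^ 2 * ∑ j ∈ T, (g j) ^ 2 := by
      have hCval : ∀ j ∈ C, (v j) ^ 2 = η ^ 2 * (g j) ^ 2 := by
        intro j hj
        have hjs : j ∉ Sθ := (Finset.mem_sdiff.1 (hCsub hj)).2
        rw [hvj j, supp_zero θ hjs]
        ring
      rw [Finset.sum_congr rfl hCval, ← Finset.mul_sum]
      apply mul_le_mul_of_nonneg_left _ (sq_nonneg η)
      exact Finset.sum_le_sum_of_subset_of_nonneg hCT (fun _ _ _ => sq_nonneg _)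
    linarith
  -- now compute the inner product
  have hinner : ⟪g, θ' - θ⟫ = ∑ j, g j * (θ' j - θ j) := by
    simp [PiLp.inner_apply, RCLike.inner_apply, mul_comm]
  have hS : supp θ' ∪ supp θ = T ∪ A := by
    rw [hA, Finset.union_sdiff_self_eq_union]
  rw [hinner, hS]
  -- restrict norm
  have hrnorm : ‖restrict g (T ∪ A)‖ ^ 2 = ∑ j ∈ T, (g j) ^ 2 + ∑ j ∈ A, (g j) ^ 2 := by
    rw [normsq_eq]
    have : ∀ j, (restrict g (T ∪ A) j) ^ 2 = if j ∈ T ∪ A then (g j) ^ 2 else 0 := by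
      intro j
      by_cases hj : j ∈ T ∪ A <;> simp [restrict, hj, -Finset.mem_union]
    rw [Finset.sum_congr rfl fun j _ => this j, Finset.sum_ite, Finset.sum_const_zero, add_zero]
    have hfil : Finset.univ.filter (fun j => j ∈ T ∪ A) = T ∪ A := by
      ext j; simp
    rw [hfil, Finset.sum_union Finset.disjoint_sdiff]
  rw [hrnorm]
  -- split the inner product sum
  have hsum : ∑ j, g j * (θ' j - θ j) =
      ∑ j ∈ T, g j * (θ' j - θ j) + ∑ j ∈ A, g j * (θ' j - θ j) := by
    rw [← Finset.sum_union Finset.disjoint_sdiff]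
    symm
    apply Finset.sum_subset (Finset.subset_univ _)
    intro j _ hj
    rw [Finset.mem_union] at hj
    push_neg at hj
    have h1 : θ' j = 0 := supp_zero θ' hj.1
    have h2 : θ j = 0 := by
      by_cases hjs : j ∈ Sθ
      · exact absurd (Finset.mem_sdiff.2 ⟨hjs, hj.1⟩) hj.2
      · exact supp_zero θ hjs
    rw [h1, h2]; ring
  rw [hsum]
  have hTterm : ∑ j ∈ T, g j * (θ' j - θ j) = ∑ j ∈ T, -(η * g j ^ 2) := by
    refine Finset.sum_congr rfl fun j hj => ?_
    rw [hTv j hj, hvj j]; ring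
  have hAterm : ∑ j ∈ A, g j * (θ' j - θ j) = ∑ j ∈ A, -(g j * θ j) := by
    refine Finset.sum_congr rfl fun j hj => ?_
    have hjT : j ∉ T := (Finset.mem_sdiff.1 hj).2
    rw [supp_zero θ' hjT]; ring
  rw [hTterm, hAterm]
  have e1 : ∑ j ∈ T, -(η * g j ^ 2) = -η * ∑ j ∈ T, g j ^ 2 := by
    rw [Finset.mul_sum]
    exact Finset.sum_congr rfl fun j _ => by ring
  have e2 : ∑ j ∈ A, -(g j * θ j) = -(∑ j ∈ A, g j * θ j) := by
    simp
  rw [e1, e2]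
  have hid : ∑ j ∈ A, (v j) ^ 2 =
      ∑ j ∈ A, (θ j) ^ 2 - 2 * η * (∑ j ∈ A, g j * θ j) + η ^ 2 * ∑ j ∈ A, g j ^ 2 := by
    rw [Finset.mul_sum, Finset.mul_sum, ← Finset.sum_sub_distrib, ← Finset.sum_add_distrib]
    refine Finset.sum_congr rfl fun j _ => ?_
    rw [hvj j]; ring
  have ht : (0:ℝ) ≤ ∑ j ∈ A, (θ j) ^ 2 := Finset.sum_nonneg fun j _ => sq_nonneg _
  nlinarith [hkey, hid, ht, hη, sq_nonneg η]
end

section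
/- Let s_* ≤ s be natural numbers, let θ ∈ ℝ^d with ‖θ‖₀ ≤ s, let θ_* ∈ ℝ^d with ‖θ_*‖₀ ≤ s_*, let g ∈ ℝ^d, let η > 0, and let θ' = H_s(θ − η g). Set S̃ = supp(θ') ∪ supp(θ) ∪ supp(θ_*). Then ‖θ' − θ + η g|_{S̃}‖² − η² ‖g|_{supp(θ') \ (supp(θ) ∪ supp(θ_*))}‖² ≤ (2 s_*/(s + s_*)) ‖θ_* − θ + η g|_{S̃}‖². -/
open scoped BigOperators

private lemma norm_sq_sum {d : ℕ} (x : EuclideanSpace ℝ (Fin d)) : ‖x‖^2 = ∑ j, x j ^ 2 := by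
  rw [EuclideanSpace.norm_eq, Real.sq_sqrt (by positivity)]
  simp [sq_abs]

private lemma mem_supp_iff {d : ℕ} {x : EuclideanSpace ℝ (Fin d)} {j : Fin d} :
    j ∈ supp x ↔ x j ≠ 0 := by
  classical
  simp [supp]

private lemma not_mem_supp {d : ℕ} {x : EuclideanSpace ℝ (Fin d)} {j : Fin d}
    (h : j ∉ supp x) : x j = 0 := by
  by_contra hx; exact h (mem_supp_iff.2 hx)

private lemma norm0_restrict_le {d : ℕ} (x : EuclideanSpace ℝ (Fin d)) (S : Finset (Fin d)) :
    norm0 (restrict x S) ≤ S.card := by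
  apply Finset.card_le_card
  intro j hj
  have h := mem_supp_iff.1 hj
  by_contra hjS
  exact h (by simp [restrict, hjS])

set_option maxHeartbeats 1000000 in
/-- With `S̃ = supp θ' ∪ supp θ ∪ supp θ_*` and `θ' = H_s(θ − η g)`,
`‖θ' − θ + η g|_{S̃}‖² − η² ‖g|_{supp θ' \ (supp θ ∪ supp θ_*)}‖²
  ≤ (2 s_*/(s + s_*)) ‖θ_* − θ + η g|_{S̃}‖²`. -/
theorem hardThreshold_step_bound {d s sstar : ℕ} (hss : sstar ≤ s)
    (θ θstar g θ' : EuclideanSpace ℝ (Fin d)) (η : ℝ) (hη : 0 < η)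
    (hθ : norm0 θ ≤ s) (hθstar : norm0 θstar ≤ sstar)
    (hHT : IsHardThreshold s (θ - η • g) θ') :
    ‖θ' - θ + η • restrict g (supp θ' ∪ supp θ ∪ supp θstar)‖ ^ 2
        - η ^ 2 * ‖restrict g (supp θ' \ (supp θ ∪ supp θstar))‖ ^ 2
      ≤ 2 * (sstar : ℝ) / ((s : ℝ) + sstar)
          * ‖θstar - θ + η • restrict g (supp θ' ∪ supp θ ∪ supp θstar)‖ ^ 2 := by
  classical
  obtain ⟨hθ's, hmin⟩ := hHT
  have hθ's' : (supp θ').card ≤ s := hθ's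
  set V : EuclideanSpace ℝ (Fin d) := θ - η • g with hVdef
  have hVj : ∀ j, V j = θ j - η * g j := by
    intro j; simp [hVdef, PiLp.sub_apply, PiLp.smul_apply]
  -- squared-norm minimality
  have key : ∀ u : EuclideanSpace ℝ (Fin d), norm0 u ≤ s →
      ∑ j, (θ' j - V j)^2 ≤ ∑ j, (u j - V j)^2 := by
    intro u hu
    have h := hmin u hu
    have h2 : ‖θ' - V‖^2 ≤ ‖u - V‖^2 := by
      have := pow_le_pow_left₀ (norm_nonneg _) h 2
      simpa using this
    rw [norm_sq_sum, norm_sq_sum] at h2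
    simpa [PiLp.sub_apply] using h2
  have hres : ∀ S : Finset (Fin d),
      ∑ j, (restrict V S j - V j)^2 = ∑ j ∈ Sᶜ, V j ^ 2 := by
    intro S
    rw [← Finset.sum_add_sum_compl S]
    have h1 : ∑ j ∈ S, (restrict V S j - V j)^2 = 0 :=
      Finset.sum_eq_zero fun j hj => by simp [restrict, hj]
    have h2 : ∑ j ∈ Sᶜ, (restrict V S j - V j)^2 = ∑ j ∈ Sᶜ, V j ^ 2 :=
      Finset.sum_congr rfl fun j hj => by
        have h0 : restrict V S j = 0 := by simp [restrict, Finset.mem_compl.1 hj]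
        rw [h0]; ring
    rw [h1, h2, zero_add]
  -- Fact 1: θ' agrees with V on its support
  have fact1 : ∀ j ∈ supp θ', θ' j = V j := by
    have h := key (restrict V (supp θ')) (le_trans (norm0_restrict_le _ _) hθ's')
    rw [hres] at h
    rw [← Finset.sum_add_sum_compl (supp θ') (fun j => (θ' j - V j)^2)] at h
    have h2 : ∑ j ∈ (supp θ')ᶜ, (θ' j - V j)^2 = ∑ j ∈ (supp θ')ᶜ, V j ^ 2 :=
      Finset.sum_congr rfl fun j hj => by
        rw [not_mem_supp (Finset.mem_compl.1 hj)]; ring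
    rw [h2] at h
    have h3 : ∑ j ∈ supp θ', (θ' j - V j)^2 ≤ 0 := by linarith
    have h4 : ∑ j ∈ supp θ', (θ' j - V j)^2 = 0 :=
      le_antisymm h3 (Finset.sum_nonneg fun i _ => sq_nonneg _)
    intro j hj
    have h5 := (Finset.sum_eq_zero_iff_of_nonneg (fun i _ => sq_nonneg _)).1 h4 j hj
    have h6 : θ' j - V j = 0 := by simpa using h5
    linarith [h6]
  have hL : ∑ j, (θ' j - V j)^2 = ∑ j ∈ (supp θ')ᶜ, V j ^ 2 := by
    rw [← Finset.sum_add_sum_compl (supp θ') (fun j => (θ' j - V j)^2)]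
    have h1 : ∑ j ∈ supp θ', (θ' j - V j)^2 = 0 :=
      Finset.sum_eq_zero fun j hj => by rw [fact1 j hj]; ring
    have h2 : ∑ j ∈ (supp θ')ᶜ, (θ' j - V j)^2 = ∑ j ∈ (supp θ')ᶜ, V j ^ 2 :=
      Finset.sum_congr rfl fun j hj => by
        rw [not_mem_supp (Finset.mem_compl.1 hj)]; ring
    rw [h1, h2, zero_add]
  -- generic complement rewriting
  have ecompl : ∀ S : Finset (Fin d),
      ∑ j ∈ Sᶜ, V j ^ 2 = ∑ j, V j ^ 2 - ∑ j ∈ S, V j ^ 2 := by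
    intro S
    rw [← Finset.sum_add_sum_compl S (fun j => V j ^ 2)]
    ring
  -- Fact 2: ordering of magnitudes
  have fact2 : ∀ j ∉ supp θ', ∀ k ∈ supp θ', V j ^ 2 ≤ V k ^ 2 := by
    intro j hj k hk
    set S := insert j ((supp θ').erase k) with hS
    have hcardpos : 0 < (supp θ').card := Finset.card_pos.2 ⟨k, hk⟩
    have hcard : S.card ≤ s := by
      have h1 : S.card ≤ ((supp θ').erase k).card + 1 := Finset.card_insert_le _ _
      have h2 : ((supp θ').erase k).card = (supp θ').card - 1 :=
        Finset.card_erase_of_mem hk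
      omega
    have h := key (restrict V S) (le_trans (norm0_restrict_le _ _) hcard)
    rw [hres, hL, ecompl, ecompl] at h
    have e3 : ∑ j' ∈ S, V j' ^ 2 = V j ^ 2 + (∑ j' ∈ supp θ', V j' ^ 2 - V k ^ 2) := by
      rw [hS, Finset.sum_insert (fun hmem => hj (Finset.mem_of_mem_erase hmem))]
      have h4 := Finset.sum_erase_add (supp θ') (fun j' => V j' ^ 2) hk
      simp only at h4
      linarith
    linarith
  -- Fact 3: if support is smaller than s, everything outside is zero
  have fact3 : (supp θ').card < s → ∀ j ∉ supp θ', V j = 0 := by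
    intro hlt j hj
    set S := insert j (supp θ') with hS
    have hcard : S.card ≤ s := by
      have h1 : S.card ≤ (supp θ').card + 1 := Finset.card_insert_le _ _
      omega
    have h := key (restrict V S) (le_trans (norm0_restrict_le _ _) hcard)
    rw [hres, hL, ecompl, ecompl] at h
    have e3 : ∑ j' ∈ S, V j' ^ 2 = V j ^ 2 + ∑ j' ∈ supp θ', V j' ^ 2 := by
      rw [hS, Finset.sum_insert hj]
    have h5 : V j ^ 2 ≤ 0 := by linarith
    have h6 : V j ^ 2 = 0 := by nlinarith [sq_nonneg (V j)]
    simpa using h6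
  -- the index sets
  set Stil := supp θ' ∪ supp θ ∪ supp θstar with hStil
  set A : Finset (Fin d) := (supp θ ∪ supp θstar) \ supp θ' with hA
  set A1 : Finset (Fin d) := (supp θ \ supp θ') \ supp θstar with hA1
  set A2 : Finset (Fin d) := supp θstar \ supp θ' with hA2
  set B : Finset (Fin d) := supp θ' \ (supp θ ∪ supp θstar) with hB
  set C : Finset (Fin d) := (supp θ' ∩ supp θ) \ supp θstar with hC
  set M : Finset (Fin d) := supp θ' ∩ supp θstar with hM
  have hsubθ' : supp θ' ⊆ Stil := by
    intro j hj; rw [hStil]; exact Finset.mem_union_left _ (Finset.mem_union_left _ hj)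
  have hsubθ : supp θ ⊆ Stil := by
    intro j hj; rw [hStil]; exact Finset.mem_union_left _ (Finset.mem_union_right _ hj)
  have hsubstar : supp θstar ⊆ Stil := by
    intro j hj; rw [hStil]; exact Finset.mem_union_right _ hj
  -- norm of x - θ + η g|_Stil as a sum over Stil
  have hsum1 : ∀ x : EuclideanSpace ℝ (Fin d), supp x ⊆ Stil →
      ‖x - θ + η • restrict g Stil‖^2 = ∑ j ∈ Stil, (x j - V j)^2 := by
    intro x hx
    have happ : ∀ j, (x - θ + η • restrict g Stil) j
        = x j - θ j + η * (if j ∈ Stil then g j else 0) := by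
      intro j; simp [restrict, PiLp.add_apply, PiLp.sub_apply, PiLp.smul_apply]
    rw [norm_sq_sum, ← Finset.sum_add_sum_compl Stil]
    have h1 : ∑ j ∈ Stilᶜ, ((x - θ + η • restrict g Stil) j)^2 = 0 :=
      Finset.sum_eq_zero fun j hj => by
        have hj' := Finset.mem_compl.1 hj
        have hx0 : x j = 0 := not_mem_supp fun h => hj' (hx h)
        have hθ0 : θ j = 0 := not_mem_supp fun h => hj' (hsubθ h)
        rw [happ, if_neg hj', hx0, hθ0]; ring
    have h2 : ∑ j ∈ Stil, ((x - θ + η • restrict g Stil) j)^2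
        = ∑ j ∈ Stil, (x j - V j)^2 :=
      Finset.sum_congr rfl fun j hj => by rw [happ, if_pos hj, hVj]; ring
    rw [h1, h2, add_zero]
  -- LHS first term
  have hAeq : Stil \ supp θ' = A := by
    ext j; rw [hStil, hA]; simp only [Finset.mem_sdiff, Finset.mem_union]; tauto
  have hw : ‖θ' - θ + η • restrict g Stil‖^2 = ∑ j ∈ A, V j ^ 2 := by
    rw [hsum1 θ' hsubθ', ← Finset.sum_sdiff hsubθ', hAeq]
    have hz : ∑ j ∈ supp θ', (θ' j - V j)^2 = 0 :=
      Finset.sum_eq_zero fun j hj => by rw [fact1 j hj]; ring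
    have hAs : ∑ j ∈ A, (θ' j - V j)^2 = ∑ j ∈ A, V j ^ 2 :=
      Finset.sum_congr rfl fun j hj => by
        have hj' : j ∉ supp θ' := (Finset.mem_sdiff.1 (hAeq ▸ hj)).2
        rw [not_mem_supp hj']; ring
    rw [hz, hAs, add_zero]
  -- LHS second term
  have hBsum : η ^ 2 * ‖restrict g B‖^2 = ∑ j ∈ B, V j ^ 2 := by
    have h1 : ‖restrict g B‖^2 = ∑ j ∈ B, g j ^ 2 := by
      rw [norm_sq_sum, ← Finset.sum_add_sum_compl B]
      have e1 : ∑ j ∈ Bᶜ, (restrict g B j)^2 = 0 :=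
        Finset.sum_eq_zero fun j hj => by
          simp [restrict, Finset.mem_compl.1 hj]
      have e2 : ∑ j ∈ B, (restrict g B j)^2 = ∑ j ∈ B, g j ^ 2 :=
        Finset.sum_congr rfl fun j hj => by simp [restrict, hj]
      rw [e1, e2, add_zero]
    rw [h1, Finset.mul_sum]
    refine Finset.sum_congr rfl fun j hj => ?_
    have hjθ : j ∉ supp θ := fun h =>
      (Finset.mem_sdiff.1 hj).2 (Finset.mem_union_left _ h)
    have hθ0 : θ j = 0 := not_mem_supp hjθ
    rw [hVj, hθ0]; ring
  -- RHS term
  have hzsum : ‖θstar - θ + η • restrict g Stil‖^2 = ∑ j ∈ Stil, (θstar j - V j)^2 :=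
    hsum1 θstar hsubstar
  rw [hw, hBsum, hzsum]
  set c : ℝ := 2 * (sstar : ℝ) / ((s : ℝ) + sstar) with hc
  have hc0 : 0 ≤ c := by
    rw [hc]; positivity
  -- split A
  have hAun : A = A1 ∪ A2 := by
    ext j; rw [hA, hA1, hA2]
    simp only [Finset.mem_sdiff, Finset.mem_union]; tauto
  have hAdis : Disjoint A1 A2 := by
    rw [hA1, hA2, Finset.disjoint_left]
    intro j hj1 hj2
    simp only [Finset.mem_sdiff] at hj1 hj2
    exact hj1.2 hj2.1
  have hAsplit : ∑ j ∈ A, V j ^ 2 = ∑ j ∈ A1, V j ^ 2 + ∑ j ∈ A2, V j ^ 2 := by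
    rw [hAun, Finset.sum_union hAdis]
  -- lower bound for the RHS sum
  have hdisA1B : Disjoint A1 B := by
    rw [hA1, hB, Finset.disjoint_left]
    intro j hj1 hj2
    simp only [Finset.mem_sdiff] at hj1 hj2
    exact hj1.1.2 hj2.1
  have hdisA1BC : Disjoint (A1 ∪ B) C := by
    rw [hA1, hB, hC, Finset.disjoint_left]
    intro j hj1 hj2
    simp only [Finset.mem_sdiff, Finset.mem_union, Finset.mem_inter] at hj1 hj2
    rcases hj1 with h | h
    · exact h.1.2 hj2.1.1
    · exact h.2 (Or.inl hj2.1.2)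
  have hDsub : A1 ∪ B ∪ C ⊆ Stil := by
    intro j hj
    rcases Finset.mem_union.1 hj with hj' | hj'
    · rcases Finset.mem_union.1 hj' with h | h
      · exact hsubθ (Finset.mem_sdiff.1 ((Finset.mem_sdiff.1 (hA1 ▸ h)).1)).1
      · exact hsubθ' (Finset.mem_sdiff.1 (hB ▸ h)).1
    · exact hsubθ' (Finset.mem_inter.1 (Finset.mem_sdiff.1 (hC ▸ hj')).1).1
  have hDstar : ∀ j ∈ A1 ∪ B ∪ C, θstar j = 0 := by
    intro j hj
    apply not_mem_supp
    rcases Finset.mem_union.1 hj with hj' | hj'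
    · rcases Finset.mem_union.1 hj' with h | h
      · exact (Finset.mem_sdiff.1 (hA1 ▸ h)).2
      · exact fun hst => (Finset.mem_sdiff.1 (hB ▸ h)).2 (Finset.mem_union_right _ hst)
    · exact (Finset.mem_sdiff.1 (hC ▸ hj')).2
  have hRlow : ∑ j ∈ A1, V j ^ 2 + ∑ j ∈ B, V j ^ 2 + ∑ j ∈ C, V j ^ 2
      ≤ ∑ j ∈ Stil, (θstar j - V j)^2 := by
    have e1 : ∑ j ∈ A1, V j ^ 2 + ∑ j ∈ B, V j ^ 2 + ∑ j ∈ C, V j ^ 2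
        = ∑ j ∈ A1 ∪ B ∪ C, (θstar j - V j)^2 := by
      rw [Finset.sum_union hdisA1BC, Finset.sum_union hdisA1B]
      have e : ∀ S : Finset (Fin d), S ⊆ A1 ∪ B ∪ C →
          ∑ j ∈ S, V j ^ 2 = ∑ j ∈ S, (θstar j - V j)^2 := by
        intro S hS
        refine Finset.sum_congr rfl fun j hj => ?_
        rw [hDstar j (hS hj)]; ring
      rw [e A1 (fun j hj => Finset.mem_union_left _ (Finset.mem_union_left _ hj)),
        e B (fun j hj => Finset.mem_union_left _ (Finset.mem_union_right _ hj)),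
        e C (fun j hj => Finset.mem_union_right _ hj)]
    rw [e1]
    exact Finset.sum_le_sum_of_subset_of_nonneg hDsub fun j _ _ => sq_nonneg _
  -- it suffices to prove the core inequality
  have hcore : ∑ j ∈ A1, V j ^ 2 + ∑ j ∈ A2, V j ^ 2 - ∑ j ∈ B, V j ^ 2
      ≤ c * (∑ j ∈ A1, V j ^ 2 + ∑ j ∈ B, V j ^ 2 + ∑ j ∈ C, V j ^ 2) := by
    have hB0 : (0:ℝ) ≤ ∑ j ∈ B, V j ^ 2 := Finset.sum_nonneg fun _ _ => sq_nonneg _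
    have hC0 : (0:ℝ) ≤ ∑ j ∈ C, V j ^ 2 := Finset.sum_nonneg fun _ _ => sq_nonneg _
    have hA10 : (0:ℝ) ≤ ∑ j ∈ A1, V j ^ 2 := Finset.sum_nonneg fun _ _ => sq_nonneg _
    rcases lt_or_eq_of_le hθ's' with hlt | heq
    · -- |supp θ'| < s : V vanishes off supp θ'
      have hz1 : ∑ j ∈ A1, V j ^ 2 = 0 := Finset.sum_eq_zero fun j hj => by
        rw [fact3 hlt j (Finset.mem_sdiff.1 (Finset.mem_sdiff.1 (hA1 ▸ hj)).1).2]; ring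
      have hz2 : ∑ j ∈ A2, V j ^ 2 = 0 := Finset.sum_eq_zero fun j hj => by
        rw [fact3 hlt j (Finset.mem_sdiff.1 (hA2 ▸ hj)).2]; ring
      rw [hz1, hz2]
      have hpos : 0 ≤ c * (0 + ∑ j ∈ B, V j ^ 2 + ∑ j ∈ C, V j ^ 2) :=
        mul_nonneg hc0 (by linarith)
      linarith
    · -- |supp θ'| = s
      -- cardinality bookkeeping
      have hdisBC : Disjoint B C := by
        rw [hB, hC, Finset.disjoint_left]
        intro j hj1 hj2
        simp only [Finset.mem_sdiff, Finset.mem_inter, Finset.mem_union] at hj1 hj2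
        exact hj1.2 (Or.inl hj2.1.2)
      have hdisBCM : Disjoint (B ∪ C) M := by
        rw [hB, hC, hM, Finset.disjoint_left]
        intro j hj1 hj2
        simp only [Finset.mem_sdiff, Finset.mem_inter, Finset.mem_union] at hj1 hj2
        rcases hj1 with h | h
        · exact h.2 (Or.inr hj2.2)
        · exact h.2 hj2.2
      have hBCM : B ∪ C ∪ M = supp θ' := by
        ext j; rw [hB, hC, hM]
        simp only [Finset.mem_union, Finset.mem_sdiff, Finset.mem_inter]
        by_cases h1 : j ∈ supp θ' <;> by_cases h2 : j ∈ supp θ <;>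
          by_cases h3 : j ∈ supp θstar <;> simp [h1, h2, h3]
      have hcardBCM : B.card + C.card + M.card = s := by
        have := congrArg Finset.card hBCM
        rwa [Finset.card_union_of_disjoint hdisBCM,
          Finset.card_union_of_disjoint hdisBC, heq] at this
      have hA2M : A2.card + M.card ≤ sstar := by
        have hdis : Disjoint A2 M := by
          rw [hA2, hM, Finset.disjoint_left]
          intro j hj1 hj2
          simp only [Finset.mem_sdiff, Finset.mem_inter] at hj1 hj2
          exact hj1.2 hj2.1
        have hun : A2 ∪ M = supp θstar := by
          ext j; rw [hA2, hM]
          simp only [Finset.mem_union, Finset.mem_sdiff, Finset.mem_inter]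
          by_cases h1 : j ∈ supp θ' <;> by_cases h3 : j ∈ supp θstar <;> simp [h1, h3]
        calc A2.card + M.card = (A2 ∪ M).card := (Finset.card_union_of_disjoint hdis).symm
          _ = (supp θstar).card := by rw [hun]
          _ ≤ sstar := hθstar
      have hA1C : A1.card + C.card ≤ s := by
        have hdis : Disjoint A1 C := by
          rw [hA1, hC, Finset.disjoint_left]
          intro j hj1 hj2
          simp only [Finset.mem_sdiff, Finset.mem_inter] at hj1 hj2
          exact hj1.1.2 hj2.1.1
        have hsub : A1 ∪ C ⊆ supp θ := by
          intro j hj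
          rcases Finset.mem_union.1 hj with h | h
          · exact (Finset.mem_sdiff.1 (Finset.mem_sdiff.1 (hA1 ▸ h)).1).1
          · exact (Finset.mem_inter.1 (Finset.mem_sdiff.1 (hC ▸ h)).1).2
        calc A1.card + C.card = (A1 ∪ C).card := (Finset.card_union_of_disjoint hdis).symm
          _ ≤ (supp θ).card := Finset.card_le_card hsub
          _ ≤ s := hθ
      -- real abbreviations
      have hT : (sstar : ℝ) ≤ (s : ℝ) := Nat.cast_le.2 hss
      have hc1 : c ≤ 1 := by
        rw [hc]
        rcases eq_or_lt_of_le (by positivity : (0:ℝ) ≤ (s:ℝ) + sstar) with h0 | hpos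
        · have hs0 : (sstar : ℝ) = 0 := by
            have := (Nat.cast_nonneg s : (0:ℝ) ≤ s)
            have := (Nat.cast_nonneg sstar : (0:ℝ) ≤ sstar)
            nlinarith
          simp [hs0]
        · rw [div_le_one hpos]; linarith
      have hcS : (sstar : ℝ) ≤ c * s := by
        rw [hc]
        rcases eq_or_lt_of_le (by positivity : (0:ℝ) ≤ (s:ℝ) + sstar) with h0 | hpos
        · have hs0 : (sstar : ℝ) = 0 := by
            have := (Nat.cast_nonneg s : (0:ℝ) ≤ s)
            have := (Nat.cast_nonneg sstar : (0:ℝ) ≤ sstar)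
            nlinarith
          simp [hs0]
        · rw [div_mul_eq_mul_div, le_div_iff₀ hpos]
          nlinarith [mul_nonneg (Nat.cast_nonneg sstar : (0:ℝ) ≤ sstar) (sub_nonneg.2 hT)]
      rcases Finset.eq_empty_or_nonempty (B ∪ C) with hBCe | hBCne
      · -- B ∪ C empty
        have hBe : B = ∅ := Finset.union_eq_empty.1 hBCe |>.1
        have hCe : C = ∅ := Finset.union_eq_empty.1 hBCe |>.2
        have hMs : M.card = s := by
          rw [hBe, hCe] at hcardBCM; simpa using hcardBCM
        have hA2e : A2 = ∅ := by
          have : A2.card = 0 := by omega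
          exact Finset.card_eq_zero.1 this
        rcases Nat.eq_zero_or_pos s with hs0 | hspos
        · have hA1e : A1 = ∅ := by
            have : A1.card = 0 := by omega
            exact Finset.card_eq_zero.1 this
          rw [hA1e, hA2e, hBe, hCe]
          simp
        · have hsstar : sstar = s := by omega
          have hc1' : c = 1 := by
            rw [hc, hsstar]
            have hs0' : (0:ℝ) < s := by exact_mod_cast hspos
            field_simp
            ring
          rw [hA2e, hBe, hCe, hc1']
          simp
      · -- B ∪ C nonempty : compare with the threshold value a
        have hBCsub : B ∪ C ⊆ supp θ' := by
          intro j hj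
          rcases Finset.mem_union.1 hj with h | h
          · exact (Finset.mem_sdiff.1 (hB ▸ h)).1
          · exact (Finset.mem_inter.1 (Finset.mem_sdiff.1 (hC ▸ h)).1).1
        set a : ℝ := (B ∪ C).inf' hBCne fun k => V k ^ 2 with ha
        obtain ⟨k0, hk0, hk0a⟩ := Finset.exists_mem_eq_inf' hBCne fun k => V k ^ 2
        have ha0 : 0 ≤ a := by rw [ha, hk0a]; exact sq_nonneg _
        have haup : ∀ j, j ∉ supp θ' → V j ^ 2 ≤ a := by
          intro j hj
          rw [ha, hk0a]
          exact fact2 j hj k0 (hBCsub hk0)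
        have hlow : ∀ k ∈ B ∪ C, a ≤ V k ^ 2 := fun k hk => Finset.inf'_le _ hk
        -- sum bounds
        have hSA1 : ∑ j ∈ A1, V j ^ 2 ≤ (A1.card : ℝ) * a := by
          have := Finset.sum_le_card_nsmul A1 (fun j => V j ^ 2) a fun j hj =>
            haup j (Finset.mem_sdiff.1 (Finset.mem_sdiff.1 (hA1 ▸ hj)).1).2
          rwa [nsmul_eq_mul] at this
        have hSA2 : ∑ j ∈ A2, V j ^ 2 ≤ (A2.card : ℝ) * a := by
          have := Finset.sum_le_card_nsmul A2 (fun j => V j ^ 2) a fun j hj =>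
            haup j (Finset.mem_sdiff.1 (hA2 ▸ hj)).2
          rwa [nsmul_eq_mul] at this
        have hSB : (B.card : ℝ) * a ≤ ∑ j ∈ B, V j ^ 2 := by
          have := Finset.card_nsmul_le_sum B (fun j => V j ^ 2) a fun j hj =>
            hlow j (Finset.mem_union_left _ hj)
          rwa [nsmul_eq_mul] at this
        have hSC : (C.card : ℝ) * a ≤ ∑ j ∈ C, V j ^ 2 := by
          have := Finset.card_nsmul_le_sum C (fun j => V j ^ 2) a fun j hj =>
            hlow j (Finset.mem_union_right _ hj)
          rwa [nsmul_eq_mul] at this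
        -- counting inequality over ℝ
        have h1R : (B.card : ℝ) + C.card + M.card = s := by exact_mod_cast hcardBCM
        have h2R : (A2.card : ℝ) + M.card ≤ sstar := by exact_mod_cast hA2M
        have h3R : (A1.card : ℝ) + C.card ≤ s := by exact_mod_cast hA1C
        have hαb : (A1.card : ℝ) ≤ (s : ℝ) - C.card := by linarith
        have hα : (1 - c) * (A1.card : ℝ) ≤ (1 - c) * ((s : ℝ) - C.card) :=
          mul_le_mul_of_nonneg_left hαb (by linarith)
        have hcb0 : 0 ≤ c * (B.card : ℝ) :=
          mul_nonneg hc0 (Nat.cast_nonneg _)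
        have ecnt : (1 - c) * (A1.card : ℝ) + (A2.card : ℝ)
            ≤ (1 + c) * (B.card : ℝ) + c * (C.card : ℝ) := by nlinarith
        have e5 : ((1 - c) * (A1.card : ℝ) + (A2.card : ℝ)) * a
            ≤ ((1 + c) * (B.card : ℝ) + c * (C.card : ℝ)) * a :=
          mul_le_mul_of_nonneg_right ecnt ha0
        have e1 : (1 - c) * (∑ j ∈ A1, V j ^ 2) ≤ (1 - c) * ((A1.card : ℝ) * a) :=
          mul_le_mul_of_nonneg_left hSA1 (by linarith)
        have e3 : (1 + c) * ((B.card : ℝ) * a) ≤ (1 + c) * ∑ j ∈ B, V j ^ 2 :=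
          mul_le_mul_of_nonneg_left hSB (by linarith)
        have e4 : c * ((C.card : ℝ) * a) ≤ c * ∑ j ∈ C, V j ^ 2 :=
          mul_le_mul_of_nonneg_left hSC hc0
        nlinarith [hSA2]

  have := mul_le_mul_of_nonneg_left hRlow hc0
  linarith [hAsplit, hcore, this]
end

section
/- Let α ∈ (0,1) and let (a_k)_{k≥0} be a sequence of nonnegative real numbers satisfying a_k ≤ (1 − α)² a_{k−1} + α (1 − α)^k a_0 for all k ≥ 1. Then a_k ≤ 2 (1 − α)^k a_0 for all k ≥ 0. -/
/-- If `α ∈ (0,1)` and `(a_k)` is a nonnegative sequence with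
`a_k ≤ (1 − α)² a_{k−1} + α (1 − α)^k a_0` for all `k ≥ 1`, then
`a_k ≤ 2 (1 − α)^k a_0` for all `k`. -/
theorem seq_le_two_geom (α : ℝ) (hα0 : 0 < α) (hα1 : α < 1) (a : ℕ → ℝ)
    (ha : ∀ k, 0 ≤ a k)
    (hrec : ∀ k : ℕ, 1 ≤ k → a k ≤ (1 - α) ^ 2 * a (k - 1) + α * (1 - α) ^ k * a 0) :
    ∀ k : ℕ, a k ≤ 2 * (1 - α) ^ k * a 0 := by
  have h1 : (0:ℝ) ≤ 1 - α := by linarith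
  have key : ∀ k : ℕ, a k ≤ (1 - α) ^ k * a 0 := by
    intro k
    induction k with
    | zero => simp
    | succ n ih =>
        have h := hrec (n + 1) (Nat.le_add_left 1 n)
        simp only [Nat.add_sub_cancel] at h
        have h2 : (1 - α) ^ 2 * a n ≤ (1 - α) ^ 2 * ((1 - α) ^ n * a 0) := by
          apply mul_le_mul_of_nonneg_left ih (by positivity)
        calc a (n + 1) ≤ (1 - α) ^ 2 * a n + α * (1 - α) ^ (n + 1) * a 0 := h
          _ ≤ (1 - α) ^ 2 * ((1 - α) ^ n * a 0) + α * (1 - α) ^ (n + 1) * a 0 := by linarith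
          _ = (1 - α) ^ (n + 1) * a 0 := by ring
  intro k
  have := key k
  nlinarith [mul_nonneg (pow_nonneg h1 k) (ha 0)]
end
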